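/- arXiv:0903.1705 — 4 statements merged into one kernel-verified Lean document; each statement's English description precedes it below -/
import Mathlib

section
/- Let A be a graded-commutative dga over ℚ, let a, b ∈ A¹ be cocycles, and let T, S ∈ A¹ satisfy d(T) = a·b and d(S) = T·b. Then the family a₁₂ = T, a₂₃ = 0, a₃₄ = −T, a₁₃ = S, a₂₄ = S is a defining system for the 4-fold Massey product ⟨[a],[b],[b],[a]⟩, and its associated representative ā₁₃·a + ā₁₂·a₃₄ + ā·a₂₄ = S·a − T·T + a·S equals 0. (This expresses that the Massey product ⟨a, 1−a, 1−a, a⟩ is trivially zero.) -/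
/-- Let `A` be a graded-commutative dga over `ℚ`, `a, b ∈ A¹` cocycles,
and `T, S ∈ A¹` with `d T = a·b` and `d S = T·b`.  Then the family
`a₁₂ = T, a₂₃ = 0, a₃₄ = -T, a₁₃ = S, a₂₄ = S` is a defining system for the 4-fold Massey
product `⟨[a],[b],[b],[a]⟩` (in particular `d a₂₃ = b̄·b = 0`, `d a₃₄ = b̄·a`,
`d a₁₃ = ā₁₂·b + ā·a₂₃ = T·b`, `d a₂₄ = b̄·a₃₄ + ā₂₃·a = b·(-T) + 0·a`), and its
associated representative `ā₁₃·a + ā₁₂·a₃₄ + ā·a₂₄ = S·a - T·T + a·S` equals `0`.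
(The Massey product `⟨a, 1-a, 1-a, a⟩` is trivially zero.) -/
theorem massey_abba_trivially_zero
    (A : Type*) [Ring A] [Algebra ℚ A]
    (deg : ℤ → Submodule ℚ A) [GradedAlgebra deg]
    (d : A →ₗ[ℚ] A)
    (hd_mem : ∀ (p : ℤ) (x : A), x ∈ deg p → d x ∈ deg (p + 1))
    (hd_sq : ∀ x : A, d (d x) = 0)
    (hleibniz : ∀ (p : ℤ) (x y : A), x ∈ deg p →
      d (x * y) = d x * y + (Int.negOnePow p : ℤ) • (x * d y))
    (hcomm : ∀ (p q : ℤ) (x y : A), x ∈ deg p → y ∈ deg q →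
      x * y = (Int.negOnePow (p * q) : ℤ) • (y * x))
    (a b T S : A)
    (ha : a ∈ deg 1) (hb : b ∈ deg 1) (hT : T ∈ deg 1) (hS : S ∈ deg 1)
    (hca : d a = 0) (hcb : d b = 0)
    (hdT : d T = a * b) (hdS : d S = T * b) :
    -- defining system conditions
    d (0 : A) = b * b ∧
    d (-T) = b * a ∧
    d S = T * b + a * (0 : A) ∧
    d S = b * (-T) + (0 : A) * a ∧
    -- the associated representative vanishes
    S * a + T * (-T) + a * S = 0 := by
  have anti : ∀ x y : A, x ∈ deg 1 → y ∈ deg 1 → x * y = -(y * x) := by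
    intro x y hx hy
    have := hcomm 1 1 x y hx hy
    simpa using this
  have sq : ∀ x : A, x ∈ deg 1 → x * x = 0 := by
    intro x hx
    have h := anti x x hx hx
    have h2 : (2 : ℚ) • (x * x) = 0 := by
      rw [two_smul]
      exact eq_neg_iff_add_eq_zero.mp h
    have := smul_eq_zero.mp h2
    rcases this with h' | h'
    · norm_num at h'
    · exact h'
  refine ⟨?_, ?_, ?_, ?_, ?_⟩
  · simp [sq b hb]
  · rw [map_neg, hdT, anti a b ha hb]; exact neg_neg _
  · simp [hdS]
  · rw [hdS, anti T b hT hb]; noncomm_ring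
  · rw [anti S a hS ha, mul_neg, sq T hT]; abel
end

section
/- Let A be a graded-commutative dga over ℚ, let a, b ∈ A¹ be cocycles, and let T, T₂, V ∈ A¹ satisfy d(T) = a·b, d(T₂) = a·T, and d(V) = T·b. Then: (i) the family a₁₂ = 0, a₂₃ = T, a₃₄ = 0, a₁₃ = T₂, a₂₄ = V is a defining system for the 4-fold Massey product ⟨[a],[a],[b],[b]⟩, with associated representative c₁ = T₂·b + a·V, and c₁ is a cocycle; (ii) the family a₁₂ = T, a₂₃ = −T, a₃₄ = T, a₁₃ = −2·T₂, a₂₄ = −2·V is a defining system for the 4-fold Massey product ⟨[a],[b],[a],[b]⟩, with associated representative c₂ = −2·T₂·b + T·T − 2·a·V; and (iii) c₂ = −2·c₁. Hence these representatives of ⟨[a],[b],[a],[b]⟩ and ⟨[a],[a],[b],[b]⟩ are proportional with ratio −2, and in particular c₂ is a coboundary if and only if c₁ is. -/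
/-- Let `A` be a graded-commutative dga over `ℚ`, `a, b ∈ A¹` cocycles,
and `T, T₂, V ∈ A¹` with `d T = a·b`, `d T₂ = a·T`, `d V = T·b`.  Then:
(i) `a₁₂ = 0, a₂₃ = T, a₃₄ = 0, a₁₃ = T₂, a₂₄ = V` is a defining system for
`⟨[a],[a],[b],[b]⟩` with associated representative `c₁ = T₂·b + a·V`, and `c₁` is a cocycle;
(ii) `a₁₂ = T, a₂₃ = -T, a₃₄ = T, a₁₃ = -2·T₂, a₂₄ = -2·V` is a defining system for
`⟨[a],[b],[a],[b]⟩` with associated representative `c₂ = -2·T₂·b + T·T - 2·a·V`;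
(iii) `c₂ = -2·c₁`; hence `c₂` is a coboundary iff `c₁` is. -/
theorem massey_aabb_abab_proportional
    (A : Type*) [Ring A] [Algebra ℚ A]
    (deg : ℤ → Submodule ℚ A) [GradedAlgebra deg]
    (d : A →ₗ[ℚ] A)
    (hd_mem : ∀ (p : ℤ) (x : A), x ∈ deg p → d x ∈ deg (p + 1))
    (hd_sq : ∀ x : A, d (d x) = 0)
    (hleibniz : ∀ (p : ℤ) (x y : A), x ∈ deg p →
      d (x * y) = d x * y + (Int.negOnePow p : ℤ) • (x * d y))
    (hcomm : ∀ (p q : ℤ) (x y : A), x ∈ deg p → y ∈ deg q →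
      x * y = (Int.negOnePow (p * q) : ℤ) • (y * x))
    (a b T T₂ V : A)
    (ha : a ∈ deg 1) (hb : b ∈ deg 1) (hT : T ∈ deg 1) (hT₂ : T₂ ∈ deg 1) (hV : V ∈ deg 1)
    (hca : d a = 0) (hcb : d b = 0)
    (hdT : d T = a * b) (hdT₂ : d T₂ = a * T) (hdV : d V = T * b) :
    -- (i) defining system for ⟨[a],[a],[b],[b]⟩ and its representative c₁ = T₂·b + a·V
    (d (0 : A) = a * a ∧
     d (0 : A) = b * b ∧
     d T₂ = (0 : A) * b + a * T ∧
     d V = a * (0 : A) + T * b ∧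
     d (T₂ * b + a * V) = 0) ∧
    -- (ii) defining system for ⟨[a],[b],[a],[b]⟩ and its representative c₂
    (d (-T) = b * a ∧
     d ((-(2 : ℚ)) • T₂) = T * a + a * (-T) ∧
     d ((-(2 : ℚ)) • V) = b * T + (-T) * b) ∧
    -- (iii) c₂ = -2·c₁
    ((-(2 : ℚ)) • T₂ * b + T * T + a * ((-(2 : ℚ)) • V) = (-(2 : ℚ)) • (T₂ * b + a * V) ∧
     ((∃ v ∈ deg 1, d v = (-(2 : ℚ)) • T₂ * b + T * T + a * ((-(2 : ℚ)) • V)) ↔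
      (∃ v ∈ deg 1, d v = T₂ * b + a * V))) := by

  -- anticommutation for degree-1 elements
  have anti : ∀ x y : A, x ∈ deg 1 → y ∈ deg 1 → x * y = -(y * x) := by
    intro x y hx hy
    have h := hcomm 1 1 x y hx hy
    simpa using h
  have sq : ∀ x : A, x ∈ deg 1 → x * x = 0 := by
    intro x hx
    have h := anti x x hx hx
    have h2 : (2 : ℚ) • (x * x) = 0 := by
      rw [two_smul]
      nth_rewrite 2 [h]
      simp
    have := congrArg (fun z => ((1:ℚ)/2) • z) h2
    simpa [smul_smul] using this
  have haa : a * a = 0 := sq a ha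
  have hbb : b * b = 0 := sq b hb
  have hTT : T * T = 0 := sq T hT
  have hba : b * a = -(a * b) := anti b a hb ha
  have hTa : T * a = -(a * T) := anti T a hT ha
  have hbT : b * T = -(T * b) := anti b T hb hT
  have leib1 : ∀ x y : A, x ∈ deg 1 → d (x * y) = d x * y - x * d y := by
    intro x y hx
    have h := hleibniz 1 x y hx
    simpa [sub_eq_add_neg] using h
  have key : (-(2 : ℚ)) • T₂ * b + T * T + a * ((-(2 : ℚ)) • V)
      = (-(2 : ℚ)) • (T₂ * b + a * V) := by
    rw [hTT, smul_mul_assoc, mul_smul_comm, smul_add]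
    abel
  refine ⟨⟨by simp [haa], by simp [hbb], by simp [hdT₂], by simp [hdV], ?_⟩,
    ⟨by simp [hdT, hba], ?_, ?_⟩, key, ?_⟩
  · rw [map_add, leib1 T₂ b hT₂, leib1 a V ha, hdT₂, hcb, hca, hdV, mul_assoc]
    simp
  · rw [map_smul, hdT₂, hTa, mul_neg, neg_smul, two_smul]
    abel
  · rw [map_smul, hdV, hbT, neg_mul, neg_smul, two_smul]
    abel
  · rw [key]
    constructor
    · rintro ⟨v, hv, hdv⟩
      refine ⟨(-(1:ℚ)/2) • v, Submodule.smul_mem _ _ hv, ?_⟩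
      rw [map_smul, hdv, smul_smul]
      norm_num
    · rintro ⟨v, hv, hdv⟩
      refine ⟨(-(2:ℚ)) • v, Submodule.smul_mem _ _ hv, ?_⟩
      rw [map_smul, hdv]
end

section
/- Let A be a graded-commutative dga over ℚ, let n ≥ 3, let a, b ∈ A¹ be cocycles, and let T₂, …, T_{n−1} ∈ A¹ satisfy d(T₂) = a·b and d(T_j) = a·T_{j−1} for 3 ≤ j ≤ n−1. Define a family a_{i,j} for 1 ≤ i ≤ j ≤ n with (i,j) ≠ (1,n) by: a_{i,i} = a for i < n; a_{n,n} = b; a_{i,j} = 0 for i < j < n; and a_{i,n} = T_{n−i+1} for 2 ≤ i ≤ n−1. Then this family is a defining system for the n-fold Massey product ⟨[a],[a],…,[a],[b]⟩ (with n−1 copies of [a]), and its associated representative Σ_{i=1}^{n−1} ā_{1,i} a_{i+1,n} equals a·T_{n−1}, which is a cocycle. In particular, if there exists T_n ∈ A¹ with d(T_n) = a·T_{n−1}, then this Massey product contains zero. (This is the formal pattern satisfied by the Bloch–Totaro cycles ρ_n(a), which obey d(ρ_n(a)) = ρ_{n−1}(a)·a.) -/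
/-- The defining system for the `n`-fold Massey product `⟨[a],…,[a],[b]⟩` built from the
Bloch–Totaro cochains: `a_{i,i} = a` for `i < n`, `a_{n,n} = b`, `a_{i,j} = 0` for
`i < j < n`, and `a_{i,n} = T_{n-i+1}` for `2 ≤ i ≤ n-1`. -/
def blochTotaroFamily {A : Type*} [Ring A] (n : ℕ) (a b : A) (T : ℕ → A) : ℕ → ℕ → A :=
  fun i j =>
    if i = j then (if j = n then b else a)
    else if j = n then T (n - i + 1) else 0


lemma btf_diag_a {A : Type*} [Ring A] (n : ℕ) (a b : A) (T : ℕ → A) (i : ℕ) (h : i ≠ n) :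
    blochTotaroFamily n a b T i i = a := by
  simp [blochTotaroFamily, h]

lemma btf_diag_b {A : Type*} [Ring A] (n : ℕ) (a b : A) (T : ℕ → A) :
    blochTotaroFamily n a b T n n = b := by
  simp [blochTotaroFamily]

lemma btf_zero {A : Type*} [Ring A] (n : ℕ) (a b : A) (T : ℕ → A) (i j : ℕ)
    (h1 : i ≠ j) (h2 : j ≠ n) : blochTotaroFamily n a b T i j = 0 := by
  simp [blochTotaroFamily, h1, h2]

lemma btf_T {A : Type*} [Ring A] (n : ℕ) (a b : A) (T : ℕ → A) (i : ℕ) (h : i ≠ n) :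
    blochTotaroFamily n a b T i n = T (n - i + 1) := by
  simp [blochTotaroFamily, h]

/-- Let `A` be a graded-commutative dga over `ℚ`, `n ≥ 3`, `a, b ∈ A¹`
cocycles, and `T₂, …, T_{n-1} ∈ A¹` with `d T₂ = a·b` and `d T_j = a·T_{j-1}` for
`3 ≤ j ≤ n-1`.  Then the family `a_{i,i} = a` (`i < n`), `a_{n,n} = b`, `a_{i,j} = 0`
(`i < j < n`), `a_{i,n} = T_{n-i+1}` (`2 ≤ i ≤ n-1`) is a defining system for the `n`-fold
Massey product `⟨[a],…,[a],[b]⟩` (all its members lie in `A¹`, and since all of them have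
degree `1` the bars are trivial), its associated representative
`Σ_{i=1}^{n-1} ā_{1,i} a_{i+1,n}` equals `a·T_{n-1}`, which is a cocycle; and if
`T_n ∈ A¹` satisfies `d T_n = a·T_{n-1}` then this representative is the coboundary
`d T_n`, so the Massey product contains zero. -/
theorem massey_power_bloch_totaro
    (A : Type*) [Ring A] [Algebra ℚ A]
    (deg : ℤ → Submodule ℚ A) [GradedAlgebra deg]
    (d : A →ₗ[ℚ] A)
    (hd_mem : ∀ (p : ℤ) (x : A), x ∈ deg p → d x ∈ deg (p + 1))
    (hd_sq : ∀ x : A, d (d x) = 0)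
    (hleibniz : ∀ (p : ℤ) (x y : A), x ∈ deg p →
      d (x * y) = d x * y + (Int.negOnePow p : ℤ) • (x * d y))
    (hcomm : ∀ (p q : ℤ) (x y : A), x ∈ deg p → y ∈ deg q →
      x * y = (Int.negOnePow (p * q) : ℤ) • (y * x))
    (n : ℕ) (hn : 3 ≤ n)
    (a b : A) (ha : a ∈ deg 1) (hb : b ∈ deg 1) (hca : d a = 0) (hcb : d b = 0)
    (T : ℕ → A)
    (hTmem : ∀ j, 2 ≤ j → j ≤ n - 1 → T j ∈ deg 1)
    (hT2 : d (T 2) = a * b)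
    (hTj : ∀ j, 3 ≤ j → j ≤ n - 1 → d (T j) = a * T (j - 1)) :
    -- all members of the family lie in A¹
    (∀ i j, 1 ≤ i → i ≤ j → j ≤ n → (i, j) ≠ (1, n) →
      blochTotaroFamily n a b T i j ∈ deg 1) ∧
    -- it is a defining system (bars are trivial in degree 1)
    (∀ i j, 1 ≤ i → i < j → j ≤ n → (i, j) ≠ (1, n) →
      d (blochTotaroFamily n a b T i j) =
        ∑ l ∈ Finset.Ico i j,
          blochTotaroFamily n a b T i l * blochTotaroFamily n a b T (l + 1) j) ∧
    -- the associated representative equals a·T_{n-1}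
    (∑ i ∈ Finset.Ico 1 n,
        blochTotaroFamily n a b T 1 i * blochTotaroFamily n a b T (i + 1) n) =
      a * T (n - 1) ∧
    -- which is a cocycle
    d (a * T (n - 1)) = 0 ∧
    -- and bounded whenever a·T_{n-1} bounds
    (∀ Tn : A, Tn ∈ deg 1 → d Tn = a * T (n - 1) →
      (∑ i ∈ Finset.Ico 1 n,
          blochTotaroFamily n a b T 1 i * blochTotaroFamily n a b T (i + 1) n) = d Tn) := by
    classical
  -- a * a = 0 by graded commutativity in odd degree
  have h := hcomm 1 1 a a ha ha
  simp only [mul_one, Int.negOnePow_one, Units.val_neg, Units.val_one, neg_smul, one_smul] at h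
  have haa : a * a = 0 := by
    have h2 : a * a + a * a = 0 := by nth_rewrite 1 [h]; exact neg_add_cancel _
    have h3 : (2 : ℚ) • (a * a) = 0 := by rw [two_smul]; exact h2
    rcases smul_eq_zero.mp h3 with h4 | h4
    · exact absurd h4 (by norm_num)
    · exact h4
  -- Leibniz in degree 1
  have hlb : ∀ x y : A, x ∈ deg 1 → d (x * y) = d x * y - x * d y := by
    intro x y hx
    rw [hleibniz 1 x y hx]
    simp only [Int.negOnePow_one, Units.val_neg, Units.val_one, neg_smul, one_smul,
      sub_eq_add_neg]
  -- the representative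
  have hrep : (∑ i ∈ Finset.Ico 1 n,
      blochTotaroFamily n a b T 1 i * blochTotaroFamily n a b T (i + 1) n) =
      a * T (n - 1) := by
    rw [Finset.sum_eq_single_of_mem 1 (Finset.mem_Ico.mpr ⟨le_refl 1, by omega⟩)]
    · rw [btf_diag_a n a b T 1 (by omega), btf_T n a b T 2 (by omega)]
      have e : n - 2 + 1 = n - 1 := by omega
      rw [e]
    · intro l hl hl1
      have hl' := Finset.mem_Ico.mp hl
      rw [btf_zero n a b T 1 l (Ne.symm hl1) (by omega), zero_mul]
  -- a · d(T (n-1)) = 0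
  have hdT : a * d (T (n - 1)) = 0 := by
    rcases eq_or_ne n 3 with rfl | h3
    · show a * d (T 2) = 0
      rw [hT2, ← mul_assoc, haa, zero_mul]
    · rw [hTj (n - 1) (by omega) le_rfl, ← mul_assoc, haa, zero_mul]
  refine ⟨?_, ?_, hrep, ?_, ?_⟩
  · -- membership
    intro i j h1 hij hjn hne
    rcases eq_or_ne i j with rfl | hij'
    · rcases eq_or_ne i n with rfl | hi
      · rw [btf_diag_b]; exact hb
      · rw [btf_diag_a n a b T i hi]; exact ha
    · rcases eq_or_ne j n with hj | hj
      · subst hj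
        have hi1 : i ≠ 1 := fun hh => hne (by rw [hh])
        rw [btf_T j a b T i (by omega)]
        exact hTmem _ (by omega) (by omega)
      · rw [btf_zero n a b T i j hij' hj]
        exact (deg 1).zero_mem
  · -- defining system
    intro i j h1 hij hjn hne
    have hsum : (∑ l ∈ Finset.Ico i j,
        blochTotaroFamily n a b T i l * blochTotaroFamily n a b T (l + 1) j) =
        blochTotaroFamily n a b T i i * blochTotaroFamily n a b T (i + 1) j := by
      rw [Finset.sum_eq_single_of_mem i (Finset.mem_Ico.mpr ⟨le_refl i, hij⟩)]
      intro l hl hli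
      have hl' := Finset.mem_Ico.mp hl
      rw [btf_zero n a b T i l (Ne.symm hli) (by omega), zero_mul]
    rw [hsum, btf_diag_a n a b T i (by omega)]
    rcases eq_or_ne j n with hj | hj
    · subst hj
      have hi1 : i ≠ 1 := fun hh => hne (by rw [hh])
      rw [btf_T j a b T i (by omega)]
      rcases eq_or_ne (i + 1) j with he | hne2
      · have e : j - i + 1 = 2 := by omega
        rw [e, hT2, he, btf_diag_b]
      · rw [btf_T j a b T (i + 1) hne2,
          hTj (j - i + 1) (by omega) (by omega)]
        have e : j - i + 1 - 1 = j - (i + 1) + 1 := by omega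
        rw [e]
    · rw [btf_zero n a b T i j (by omega) hj, map_zero]
      rcases eq_or_ne (i + 1) j with rfl | hne2
      · rw [btf_diag_a n a b T (i + 1) hj, haa]
      · rw [btf_zero n a b T (i + 1) j hne2 hj, mul_zero]
  · -- cocycle
    rw [hlb a (T (n - 1)) ha, hca, zero_mul, hdT, sub_zero]
  · -- bounding
    intro Tn _ hdTn
    rw [hrep, hdTn]
end

section
/- Let A be a graded-commutative dga over ℚ, let α, α', β, β' ∈ A¹ be cocycles, and let T_a, T_b ∈ A¹ satisfy d(T_a) = α·α' and d(T_b) = β·β'. Let N be the 7×7 strictly upper-triangular matrix over A whose only nonzero entries are: N₁₂ = β − α, N₁₃ = β' − α', N₁₅ = T_b − T_a, N₁₆ = T_a − T_b, N₂₄ = α − β, N₂₅ = −β', N₂₆ = α', N₃₅ = α, N₃₆ = −β, N₃₇ = α' − β'. Then d(N) + N·N = 0, where d is applied entrywise and N·N is the matrix product over A; that is, for all 1 ≤ i, j ≤ 7 one has d(N_{ij}) + Σ_{k=1}^{7} N_{ik}·N_{kj} = 0. (With α = [a], α' = [1−a], β = [b], β' = [1−b] and T_a, T_b Totaro cycles bounding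 the Steinberg products, this says that the matrix of Figure 2 defines a square-zero differential on the minimal cell module A ⊕ A(−1)² ⊕ A(−2)⁴ for n = 2.) -/
/-- The 7×7 strictly upper-triangular matrix of Figure 2: its only nonzero entries are
`N₁₂ = β-α`, `N₁₃ = β'-α'`, `N₁₅ = T_b-T_a`, `N₁₆ = T_a-T_b`, `N₂₄ = α-β`, `N₂₅ = -β'`,
`N₂₆ = α'`, `N₃₅ = α`, `N₃₆ = -β`, `N₃₇ = α'-β'` (1-based indexing). -/
def figureTwoMatrix {A : Type*} [Ring A] (α α' β β' Ta Tb : A) : Matrix (Fin 7) (Fin 7) A :=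
  !![0, β - α, β' - α', 0,     Tb - Ta, Ta - Tb, 0;
     0, 0,     0,       α - β, -β',     α',      0;
     0, 0,     0,       0,     α,       -β,      α' - β';
     0, 0,     0,       0,     0,       0,       0;
     0, 0,     0,       0,     0,       0,       0;
     0, 0,     0,       0,     0,       0,       0;
     0, 0,     0,       0,     0,       0,       0]

set_option maxHeartbeats 4000000 in
/-- Let `A` be a graded-commutative dga over `ℚ`, `α, α', β, β' ∈ A¹`
cocycles, and `T_a, T_b ∈ A¹` with `d T_a = α·α'` and `d T_b = β·β'`.  Let `N` be the
7×7 strictly upper-triangular matrix of Figure 2.  Then `d N + N·N = 0`, where `d` is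
applied entrywise and `N·N` is the matrix product over `A`: for all `i, j` one has
`d N_{ij} + Σ_l N_{il}·N_{lj} = 0`.  (With `α = [a]`, `α' = [1-a]`, `β = [b]`,
`β' = [1-b]` and `T_a, T_b` Totaro cycles bounding the Steinberg products, the matrix of
Figure 2 defines a square-zero differential on the minimal cell module
`A ⊕ A(-1)² ⊕ A(-2)⁴` for `n = 2`.) -/
theorem minimal_module_differential_squares_to_zero
    (A : Type*) [Ring A] [Algebra ℚ A]
    (deg : ℤ → Submodule ℚ A) [GradedAlgebra deg]
    (d : A →ₗ[ℚ] A)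
    (hd_mem : ∀ (p : ℤ) (x : A), x ∈ deg p → d x ∈ deg (p + 1))
    (hd_sq : ∀ x : A, d (d x) = 0)
    (hleibniz : ∀ (p : ℤ) (x y : A), x ∈ deg p →
      d (x * y) = d x * y + (Int.negOnePow p : ℤ) • (x * d y))
    (hcomm : ∀ (p q : ℤ) (x y : A), x ∈ deg p → y ∈ deg q →
      x * y = (Int.negOnePow (p * q) : ℤ) • (y * x))
    (α α' β β' Ta Tb : A)
    (hα : α ∈ deg 1) (hα' : α' ∈ deg 1) (hβ : β ∈ deg 1) (hβ' : β' ∈ deg 1)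
    (hTa : Ta ∈ deg 1) (hTb : Tb ∈ deg 1)
    (hcα : d α = 0) (hcα' : d α' = 0) (hcβ : d β = 0) (hcβ' : d β' = 0)
    (hdTa : d Ta = α * α') (hdTb : d Tb = β * β') :
    ∀ i j : Fin 7,
      d (figureTwoMatrix α α' β β' Ta Tb i j) +
        ∑ l : Fin 7,
          figureTwoMatrix α α' β β' Ta Tb i l * figureTwoMatrix α α' β β' Ta Tb l j = 0 := by
  have ac : ∀ x y : A, x ∈ deg 1 → y ∈ deg 1 → x * y = -(y * x) := by
    intro x y hx hy
    have h := hcomm 1 1 x y hx hy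
    simpa using h
  have sq : ∀ x : A, x ∈ deg 1 → x * x = 0 := by
    intro x hx
    have h := ac x x hx hx
    have h2 : (2 : ℚ) • (x * x) = 0 := by
      rw [two_smul]
      exact eq_neg_iff_add_eq_zero.mp h
    exact (smul_eq_zero.mp h2).resolve_left (by norm_num)
  have hβ'α := ac β' α hβ' hα
  have hα'α := ac α' α hα' hα
  have hα'β := ac α' β hα' hβ
  have hβα := ac β α hβ hα
  have hβ'α' := ac β' α' hβ' hα'
  have hβ'β := ac β' β hβ' hβ
  have sα := sq α hα
  have sβ := sq β hβ
  have sα' := sq α' hα'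
  have sβ' := sq β' hβ'
  have e0000 : figureTwoMatrix α α' β β' Ta Tb (0 : Fin 7) (0 : Fin 7) = (0:A) := rfl
  have e0001 : figureTwoMatrix α α' β β' Ta Tb (0 : Fin 7) (⟨0, by omega⟩ : Fin 7) = (0:A) := rfl
  have e0010 : figureTwoMatrix α α' β β' Ta Tb (⟨0, by omega⟩ : Fin 7) (0 : Fin 7) = (0:A) := rfl
  have e0011 : figureTwoMatrix α α' β β' Ta Tb (⟨0, by omega⟩ : Fin 7) (⟨0, by omega⟩ : Fin 7) = (0:A) := rfl
  have e0100 : figureTwoMatrix α α' β β' Ta Tb (0 : Fin 7) (1 : Fin 7) = β - α := rfl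
  have e0101 : figureTwoMatrix α α' β β' Ta Tb (0 : Fin 7) (⟨1, by omega⟩ : Fin 7) = β - α := rfl
  have e0110 : figureTwoMatrix α α' β β' Ta Tb (⟨0, by omega⟩ : Fin 7) (1 : Fin 7) = β - α := rfl
  have e0111 : figureTwoMatrix α α' β β' Ta Tb (⟨0, by omega⟩ : Fin 7) (⟨1, by omega⟩ : Fin 7) = β - α := rfl
  have e0200 : figureTwoMatrix α α' β β' Ta Tb (0 : Fin 7) (2 : Fin 7) = β' - α' := rfl
  have e0201 : figureTwoMatrix α α' β β' Ta Tb (0 : Fin 7) (⟨2, by omega⟩ : Fin 7) = β' - α' := rfl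
  have e0210 : figureTwoMatrix α α' β β' Ta Tb (⟨0, by omega⟩ : Fin 7) (2 : Fin 7) = β' - α' := rfl
  have e0211 : figureTwoMatrix α α' β β' Ta Tb (⟨0, by omega⟩ : Fin 7) (⟨2, by omega⟩ : Fin 7) = β' - α' := rfl
  have e0300 : figureTwoMatrix α α' β β' Ta Tb (0 : Fin 7) (3 : Fin 7) = (0:A) := rfl
  have e0301 : figureTwoMatrix α α' β β' Ta Tb (0 : Fin 7) (⟨3, by omega⟩ : Fin 7) = (0:A) := rfl
  have e0310 : figureTwoMatrix α α' β β' Ta Tb (⟨0, by omega⟩ : Fin 7) (3 : Fin 7) = (0:A) := rfl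
  have e0311 : figureTwoMatrix α α' β β' Ta Tb (⟨0, by omega⟩ : Fin 7) (⟨3, by omega⟩ : Fin 7) = (0:A) := rfl
  have e0400 : figureTwoMatrix α α' β β' Ta Tb (0 : Fin 7) (4 : Fin 7) = Tb - Ta := rfl
  have e0401 : figureTwoMatrix α α' β β' Ta Tb (0 : Fin 7) (⟨4, by omega⟩ : Fin 7) = Tb - Ta := rfl
  have e0410 : figureTwoMatrix α α' β β' Ta Tb (⟨0, by omega⟩ : Fin 7) (4 : Fin 7) = Tb - Ta := rfl
  have e0411 : figureTwoMatrix α α' β β' Ta Tb (⟨0, by omega⟩ : Fin 7) (⟨4, by omega⟩ : Fin 7) = Tb - Ta := rfl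
  have e0500 : figureTwoMatrix α α' β β' Ta Tb (0 : Fin 7) (5 : Fin 7) = Ta - Tb := rfl
  have e0501 : figureTwoMatrix α α' β β' Ta Tb (0 : Fin 7) (⟨5, by omega⟩ : Fin 7) = Ta - Tb := rfl
  have e0510 : figureTwoMatrix α α' β β' Ta Tb (⟨0, by omega⟩ : Fin 7) (5 : Fin 7) = Ta - Tb := rfl
  have e0511 : figureTwoMatrix α α' β β' Ta Tb (⟨0, by omega⟩ : Fin 7) (⟨5, by omega⟩ : Fin 7) = Ta - Tb := rfl
  have e0600 : figureTwoMatrix α α' β β' Ta Tb (0 : Fin 7) (6 : Fin 7) = (0:A) := rfl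
  have e0601 : figureTwoMatrix α α' β β' Ta Tb (0 : Fin 7) (⟨6, by omega⟩ : Fin 7) = (0:A) := rfl
  have e0610 : figureTwoMatrix α α' β β' Ta Tb (⟨0, by omega⟩ : Fin 7) (6 : Fin 7) = (0:A) := rfl
  have e0611 : figureTwoMatrix α α' β β' Ta Tb (⟨0, by omega⟩ : Fin 7) (⟨6, by omega⟩ : Fin 7) = (0:A) := rfl
  have e1000 : figureTwoMatrix α α' β β' Ta Tb (1 : Fin 7) (0 : Fin 7) = (0:A) := rfl
  have e1001 : figureTwoMatrix α α' β β' Ta Tb (1 : Fin 7) (⟨0, by omega⟩ : Fin 7) = (0:A) := rfl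
  have e1010 : figureTwoMatrix α α' β β' Ta Tb (⟨1, by omega⟩ : Fin 7) (0 : Fin 7) = (0:A) := rfl
  have e1011 : figureTwoMatrix α α' β β' Ta Tb (⟨1, by omega⟩ : Fin 7) (⟨0, by omega⟩ : Fin 7) = (0:A) := rfl
  have e1100 : figureTwoMatrix α α' β β' Ta Tb (1 : Fin 7) (1 : Fin 7) = (0:A) := rfl
  have e1101 : figureTwoMatrix α α' β β' Ta Tb (1 : Fin 7) (⟨1, by omega⟩ : Fin 7) = (0:A) := rfl
  have e1110 : figureTwoMatrix α α' β β' Ta Tb (⟨1, by omega⟩ : Fin 7) (1 : Fin 7) = (0:A) := rfl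
  have e1111 : figureTwoMatrix α α' β β' Ta Tb (⟨1, by omega⟩ : Fin 7) (⟨1, by omega⟩ : Fin 7) = (0:A) := rfl
  have e1200 : figureTwoMatrix α α' β β' Ta Tb (1 : Fin 7) (2 : Fin 7) = (0:A) := rfl
  have e1201 : figureTwoMatrix α α' β β' Ta Tb (1 : Fin 7) (⟨2, by omega⟩ : Fin 7) = (0:A) := rfl
  have e1210 : figureTwoMatrix α α' β β' Ta Tb (⟨1, by omega⟩ : Fin 7) (2 : Fin 7) = (0:A) := rfl
  have e1211 : figureTwoMatrix α α' β β' Ta Tb (⟨1, by omega⟩ : Fin 7) (⟨2, by omega⟩ : Fin 7) = (0:A) := rfl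
  have e1300 : figureTwoMatrix α α' β β' Ta Tb (1 : Fin 7) (3 : Fin 7) = α - β := rfl
  have e1301 : figureTwoMatrix α α' β β' Ta Tb (1 : Fin 7) (⟨3, by omega⟩ : Fin 7) = α - β := rfl
  have e1310 : figureTwoMatrix α α' β β' Ta Tb (⟨1, by omega⟩ : Fin 7) (3 : Fin 7) = α - β := rfl
  have e1311 : figureTwoMatrix α α' β β' Ta Tb (⟨1, by omega⟩ : Fin 7) (⟨3, by omega⟩ : Fin 7) = α - β := rfl
  have e1400 : figureTwoMatrix α α' β β' Ta Tb (1 : Fin 7) (4 : Fin 7) = -β' := rfl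
  have e1401 : figureTwoMatrix α α' β β' Ta Tb (1 : Fin 7) (⟨4, by omega⟩ : Fin 7) = -β' := rfl
  have e1410 : figureTwoMatrix α α' β β' Ta Tb (⟨1, by omega⟩ : Fin 7) (4 : Fin 7) = -β' := rfl
  have e1411 : figureTwoMatrix α α' β β' Ta Tb (⟨1, by omega⟩ : Fin 7) (⟨4, by omega⟩ : Fin 7) = -β' := rfl
  have e1500 : figureTwoMatrix α α' β β' Ta Tb (1 : Fin 7) (5 : Fin 7) = α' := rfl
  have e1501 : figureTwoMatrix α α' β β' Ta Tb (1 : Fin 7) (⟨5, by omega⟩ : Fin 7) = α' := rfl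
  have e1510 : figureTwoMatrix α α' β β' Ta Tb (⟨1, by omega⟩ : Fin 7) (5 : Fin 7) = α' := rfl
  have e1511 : figureTwoMatrix α α' β β' Ta Tb (⟨1, by omega⟩ : Fin 7) (⟨5, by omega⟩ : Fin 7) = α' := rfl
  have e1600 : figureTwoMatrix α α' β β' Ta Tb (1 : Fin 7) (6 : Fin 7) = (0:A) := rfl
  have e1601 : figureTwoMatrix α α' β β' Ta Tb (1 : Fin 7) (⟨6, by omega⟩ : Fin 7) = (0:A) := rfl
  have e1610 : figureTwoMatrix α α' β β' Ta Tb (⟨1, by omega⟩ : Fin 7) (6 : Fin 7) = (0:A) := rfl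
  have e1611 : figureTwoMatrix α α' β β' Ta Tb (⟨1, by omega⟩ : Fin 7) (⟨6, by omega⟩ : Fin 7) = (0:A) := rfl
  have e2000 : figureTwoMatrix α α' β β' Ta Tb (2 : Fin 7) (0 : Fin 7) = (0:A) := rfl
  have e2001 : figureTwoMatrix α α' β β' Ta Tb (2 : Fin 7) (⟨0, by omega⟩ : Fin 7) = (0:A) := rfl
  have e2010 : figureTwoMatrix α α' β β' Ta Tb (⟨2, by omega⟩ : Fin 7) (0 : Fin 7) = (0:A) := rfl
  have e2011 : figureTwoMatrix α α' β β' Ta Tb (⟨2, by omega⟩ : Fin 7) (⟨0, by omega⟩ : Fin 7) = (0:A) := rfl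
  have e2100 : figureTwoMatrix α α' β β' Ta Tb (2 : Fin 7) (1 : Fin 7) = (0:A) := rfl
  have e2101 : figureTwoMatrix α α' β β' Ta Tb (2 : Fin 7) (⟨1, by omega⟩ : Fin 7) = (0:A) := rfl
  have e2110 : figureTwoMatrix α α' β β' Ta Tb (⟨2, by omega⟩ : Fin 7) (1 : Fin 7) = (0:A) := rfl
  have e2111 : figureTwoMatrix α α' β β' Ta Tb (⟨2, by omega⟩ : Fin 7) (⟨1, by omega⟩ : Fin 7) = (0:A) := rfl
  have e2200 : figureTwoMatrix α α' β β' Ta Tb (2 : Fin 7) (2 : Fin 7) = (0:A) := rfl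
  have e2201 : figureTwoMatrix α α' β β' Ta Tb (2 : Fin 7) (⟨2, by omega⟩ : Fin 7) = (0:A) := rfl
  have e2210 : figureTwoMatrix α α' β β' Ta Tb (⟨2, by omega⟩ : Fin 7) (2 : Fin 7) = (0:A) := rfl
  have e2211 : figureTwoMatrix α α' β β' Ta Tb (⟨2, by omega⟩ : Fin 7) (⟨2, by omega⟩ : Fin 7) = (0:A) := rfl
  have e2300 : figureTwoMatrix α α' β β' Ta Tb (2 : Fin 7) (3 : Fin 7) = (0:A) := rfl
  have e2301 : figureTwoMatrix α α' β β' Ta Tb (2 : Fin 7) (⟨3, by omega⟩ : Fin 7) = (0:A) := rfl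
  have e2310 : figureTwoMatrix α α' β β' Ta Tb (⟨2, by omega⟩ : Fin 7) (3 : Fin 7) = (0:A) := rfl
  have e2311 : figureTwoMatrix α α' β β' Ta Tb (⟨2, by omega⟩ : Fin 7) (⟨3, by omega⟩ : Fin 7) = (0:A) := rfl
  have e2400 : figureTwoMatrix α α' β β' Ta Tb (2 : Fin 7) (4 : Fin 7) = α := rfl
  have e2401 : figureTwoMatrix α α' β β' Ta Tb (2 : Fin 7) (⟨4, by omega⟩ : Fin 7) = α := rfl
  have e2410 : figureTwoMatrix α α' β β' Ta Tb (⟨2, by omega⟩ : Fin 7) (4 : Fin 7) = α := rfl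
  have e2411 : figureTwoMatrix α α' β β' Ta Tb (⟨2, by omega⟩ : Fin 7) (⟨4, by omega⟩ : Fin 7) = α := rfl
  have e2500 : figureTwoMatrix α α' β β' Ta Tb (2 : Fin 7) (5 : Fin 7) = -β := rfl
  have e2501 : figureTwoMatrix α α' β β' Ta Tb (2 : Fin 7) (⟨5, by omega⟩ : Fin 7) = -β := rfl
  have e2510 : figureTwoMatrix α α' β β' Ta Tb (⟨2, by omega⟩ : Fin 7) (5 : Fin 7) = -β := rfl
  have e2511 : figureTwoMatrix α α' β β' Ta Tb (⟨2, by omega⟩ : Fin 7) (⟨5, by omega⟩ : Fin 7) = -β := rfl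
  have e2600 : figureTwoMatrix α α' β β' Ta Tb (2 : Fin 7) (6 : Fin 7) = α' - β' := rfl
  have e2601 : figureTwoMatrix α α' β β' Ta Tb (2 : Fin 7) (⟨6, by omega⟩ : Fin 7) = α' - β' := rfl
  have e2610 : figureTwoMatrix α α' β β' Ta Tb (⟨2, by omega⟩ : Fin 7) (6 : Fin 7) = α' - β' := rfl
  have e2611 : figureTwoMatrix α α' β β' Ta Tb (⟨2, by omega⟩ : Fin 7) (⟨6, by omega⟩ : Fin 7) = α' - β' := rfl
  have e3000 : figureTwoMatrix α α' β β' Ta Tb (3 : Fin 7) (0 : Fin 7) = (0:A) := rfl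
  have e3001 : figureTwoMatrix α α' β β' Ta Tb (3 : Fin 7) (⟨0, by omega⟩ : Fin 7) = (0:A) := rfl
  have e3010 : figureTwoMatrix α α' β β' Ta Tb (⟨3, by omega⟩ : Fin 7) (0 : Fin 7) = (0:A) := rfl
  have e3011 : figureTwoMatrix α α' β β' Ta Tb (⟨3, by omega⟩ : Fin 7) (⟨0, by omega⟩ : Fin 7) = (0:A) := rfl
  have e3100 : figureTwoMatrix α α' β β' Ta Tb (3 : Fin 7) (1 : Fin 7) = (0:A) := rfl
  have e3101 : figureTwoMatrix α α' β β' Ta Tb (3 : Fin 7) (⟨1, by omega⟩ : Fin 7) = (0:A) := rfl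
  have e3110 : figureTwoMatrix α α' β β' Ta Tb (⟨3, by omega⟩ : Fin 7) (1 : Fin 7) = (0:A) := rfl
  have e3111 : figureTwoMatrix α α' β β' Ta Tb (⟨3, by omega⟩ : Fin 7) (⟨1, by omega⟩ : Fin 7) = (0:A) := rfl
  have e3200 : figureTwoMatrix α α' β β' Ta Tb (3 : Fin 7) (2 : Fin 7) = (0:A) := rfl
  have e3201 : figureTwoMatrix α α' β β' Ta Tb (3 : Fin 7) (⟨2, by omega⟩ : Fin 7) = (0:A) := rfl
  have e3210 : figureTwoMatrix α α' β β' Ta Tb (⟨3, by omega⟩ : Fin 7) (2 : Fin 7) = (0:A) := rfl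
  have e3211 : figureTwoMatrix α α' β β' Ta Tb (⟨3, by omega⟩ : Fin 7) (⟨2, by omega⟩ : Fin 7) = (0:A) := rfl
  have e3300 : figureTwoMatrix α α' β β' Ta Tb (3 : Fin 7) (3 : Fin 7) = (0:A) := rfl
  have e3301 : figureTwoMatrix α α' β β' Ta Tb (3 : Fin 7) (⟨3, by omega⟩ : Fin 7) = (0:A) := rfl
  have e3310 : figureTwoMatrix α α' β β' Ta Tb (⟨3, by omega⟩ : Fin 7) (3 : Fin 7) = (0:A) := rfl
  have e3311 : figureTwoMatrix α α' β β' Ta Tb (⟨3, by omega⟩ : Fin 7) (⟨3, by omega⟩ : Fin 7) = (0:A) := rfl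
  have e3400 : figureTwoMatrix α α' β β' Ta Tb (3 : Fin 7) (4 : Fin 7) = (0:A) := rfl
  have e3401 : figureTwoMatrix α α' β β' Ta Tb (3 : Fin 7) (⟨4, by omega⟩ : Fin 7) = (0:A) := rfl
  have e3410 : figureTwoMatrix α α' β β' Ta Tb (⟨3, by omega⟩ : Fin 7) (4 : Fin 7) = (0:A) := rfl
  have e3411 : figureTwoMatrix α α' β β' Ta Tb (⟨3, by omega⟩ : Fin 7) (⟨4, by omega⟩ : Fin 7) = (0:A) := rfl
  have e3500 : figureTwoMatrix α α' β β' Ta Tb (3 : Fin 7) (5 : Fin 7) = (0:A) := rfl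
  have e3501 : figureTwoMatrix α α' β β' Ta Tb (3 : Fin 7) (⟨5, by omega⟩ : Fin 7) = (0:A) := rfl
  have e3510 : figureTwoMatrix α α' β β' Ta Tb (⟨3, by omega⟩ : Fin 7) (5 : Fin 7) = (0:A) := rfl
  have e3511 : figureTwoMatrix α α' β β' Ta Tb (⟨3, by omega⟩ : Fin 7) (⟨5, by omega⟩ : Fin 7) = (0:A) := rfl
  have e3600 : figureTwoMatrix α α' β β' Ta Tb (3 : Fin 7) (6 : Fin 7) = (0:A) := rfl
  have e3601 : figureTwoMatrix α α' β β' Ta Tb (3 : Fin 7) (⟨6, by omega⟩ : Fin 7) = (0:A) := rfl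
  have e3610 : figureTwoMatrix α α' β β' Ta Tb (⟨3, by omega⟩ : Fin 7) (6 : Fin 7) = (0:A) := rfl
  have e3611 : figureTwoMatrix α α' β β' Ta Tb (⟨3, by omega⟩ : Fin 7) (⟨6, by omega⟩ : Fin 7) = (0:A) := rfl
  have e4000 : figureTwoMatrix α α' β β' Ta Tb (4 : Fin 7) (0 : Fin 7) = (0:A) := rfl
  have e4001 : figureTwoMatrix α α' β β' Ta Tb (4 : Fin 7) (⟨0, by omega⟩ : Fin 7) = (0:A) := rfl
  have e4010 : figureTwoMatrix α α' β β' Ta Tb (⟨4, by omega⟩ : Fin 7) (0 : Fin 7) = (0:A) := rfl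
  have e4011 : figureTwoMatrix α α' β β' Ta Tb (⟨4, by omega⟩ : Fin 7) (⟨0, by omega⟩ : Fin 7) = (0:A) := rfl
  have e4100 : figureTwoMatrix α α' β β' Ta Tb (4 : Fin 7) (1 : Fin 7) = (0:A) := rfl
  have e4101 : figureTwoMatrix α α' β β' Ta Tb (4 : Fin 7) (⟨1, by omega⟩ : Fin 7) = (0:A) := rfl
  have e4110 : figureTwoMatrix α α' β β' Ta Tb (⟨4, by omega⟩ : Fin 7) (1 : Fin 7) = (0:A) := rfl
  have e4111 : figureTwoMatrix α α' β β' Ta Tb (⟨4, by omega⟩ : Fin 7) (⟨1, by omega⟩ : Fin 7) = (0:A) := rfl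
  have e4200 : figureTwoMatrix α α' β β' Ta Tb (4 : Fin 7) (2 : Fin 7) = (0:A) := rfl
  have e4201 : figureTwoMatrix α α' β β' Ta Tb (4 : Fin 7) (⟨2, by omega⟩ : Fin 7) = (0:A) := rfl
  have e4210 : figureTwoMatrix α α' β β' Ta Tb (⟨4, by omega⟩ : Fin 7) (2 : Fin 7) = (0:A) := rfl
  have e4211 : figureTwoMatrix α α' β β' Ta Tb (⟨4, by omega⟩ : Fin 7) (⟨2, by omega⟩ : Fin 7) = (0:A) := rfl
  have e4300 : figureTwoMatrix α α' β β' Ta Tb (4 : Fin 7) (3 : Fin 7) = (0:A) := rfl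
  have e4301 : figureTwoMatrix α α' β β' Ta Tb (4 : Fin 7) (⟨3, by omega⟩ : Fin 7) = (0:A) := rfl
  have e4310 : figureTwoMatrix α α' β β' Ta Tb (⟨4, by omega⟩ : Fin 7) (3 : Fin 7) = (0:A) := rfl
  have e4311 : figureTwoMatrix α α' β β' Ta Tb (⟨4, by omega⟩ : Fin 7) (⟨3, by omega⟩ : Fin 7) = (0:A) := rfl
  have e4400 : figureTwoMatrix α α' β β' Ta Tb (4 : Fin 7) (4 : Fin 7) = (0:A) := rfl
  have e4401 : figureTwoMatrix α α' β β' Ta Tb (4 : Fin 7) (⟨4, by omega⟩ : Fin 7) = (0:A) := rfl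
  have e4410 : figureTwoMatrix α α' β β' Ta Tb (⟨4, by omega⟩ : Fin 7) (4 : Fin 7) = (0:A) := rfl
  have e4411 : figureTwoMatrix α α' β β' Ta Tb (⟨4, by omega⟩ : Fin 7) (⟨4, by omega⟩ : Fin 7) = (0:A) := rfl
  have e4500 : figureTwoMatrix α α' β β' Ta Tb (4 : Fin 7) (5 : Fin 7) = (0:A) := rfl
  have e4501 : figureTwoMatrix α α' β β' Ta Tb (4 : Fin 7) (⟨5, by omega⟩ : Fin 7) = (0:A) := rfl
  have e4510 : figureTwoMatrix α α' β β' Ta Tb (⟨4, by omega⟩ : Fin 7) (5 : Fin 7) = (0:A) := rfl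
  have e4511 : figureTwoMatrix α α' β β' Ta Tb (⟨4, by omega⟩ : Fin 7) (⟨5, by omega⟩ : Fin 7) = (0:A) := rfl
  have e4600 : figureTwoMatrix α α' β β' Ta Tb (4 : Fin 7) (6 : Fin 7) = (0:A) := rfl
  have e4601 : figureTwoMatrix α α' β β' Ta Tb (4 : Fin 7) (⟨6, by omega⟩ : Fin 7) = (0:A) := rfl
  have e4610 : figureTwoMatrix α α' β β' Ta Tb (⟨4, by omega⟩ : Fin 7) (6 : Fin 7) = (0:A) := rfl
  have e4611 : figureTwoMatrix α α' β β' Ta Tb (⟨4, by omega⟩ : Fin 7) (⟨6, by omega⟩ : Fin 7) = (0:A) := rfl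
  have e5000 : figureTwoMatrix α α' β β' Ta Tb (5 : Fin 7) (0 : Fin 7) = (0:A) := rfl
  have e5001 : figureTwoMatrix α α' β β' Ta Tb (5 : Fin 7) (⟨0, by omega⟩ : Fin 7) = (0:A) := rfl
  have e5010 : figureTwoMatrix α α' β β' Ta Tb (⟨5, by omega⟩ : Fin 7) (0 : Fin 7) = (0:A) := rfl
  have e5011 : figureTwoMatrix α α' β β' Ta Tb (⟨5, by omega⟩ : Fin 7) (⟨0, by omega⟩ : Fin 7) = (0:A) := rfl
  have e5100 : figureTwoMatrix α α' β β' Ta Tb (5 : Fin 7) (1 : Fin 7) = (0:A) := rfl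
  have e5101 : figureTwoMatrix α α' β β' Ta Tb (5 : Fin 7) (⟨1, by omega⟩ : Fin 7) = (0:A) := rfl
  have e5110 : figureTwoMatrix α α' β β' Ta Tb (⟨5, by omega⟩ : Fin 7) (1 : Fin 7) = (0:A) := rfl
  have e5111 : figureTwoMatrix α α' β β' Ta Tb (⟨5, by omega⟩ : Fin 7) (⟨1, by omega⟩ : Fin 7) = (0:A) := rfl
  have e5200 : figureTwoMatrix α α' β β' Ta Tb (5 : Fin 7) (2 : Fin 7) = (0:A) := rfl
  have e5201 : figureTwoMatrix α α' β β' Ta Tb (5 : Fin 7) (⟨2, by omega⟩ : Fin 7) = (0:A) := rfl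
  have e5210 : figureTwoMatrix α α' β β' Ta Tb (⟨5, by omega⟩ : Fin 7) (2 : Fin 7) = (0:A) := rfl
  have e5211 : figureTwoMatrix α α' β β' Ta Tb (⟨5, by omega⟩ : Fin 7) (⟨2, by omega⟩ : Fin 7) = (0:A) := rfl
  have e5300 : figureTwoMatrix α α' β β' Ta Tb (5 : Fin 7) (3 : Fin 7) = (0:A) := rfl
  have e5301 : figureTwoMatrix α α' β β' Ta Tb (5 : Fin 7) (⟨3, by omega⟩ : Fin 7) = (0:A) := rfl
  have e5310 : figureTwoMatrix α α' β β' Ta Tb (⟨5, by omega⟩ : Fin 7) (3 : Fin 7) = (0:A) := rfl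
  have e5311 : figureTwoMatrix α α' β β' Ta Tb (⟨5, by omega⟩ : Fin 7) (⟨3, by omega⟩ : Fin 7) = (0:A) := rfl
  have e5400 : figureTwoMatrix α α' β β' Ta Tb (5 : Fin 7) (4 : Fin 7) = (0:A) := rfl
  have e5401 : figureTwoMatrix α α' β β' Ta Tb (5 : Fin 7) (⟨4, by omega⟩ : Fin 7) = (0:A) := rfl
  have e5410 : figureTwoMatrix α α' β β' Ta Tb (⟨5, by omega⟩ : Fin 7) (4 : Fin 7) = (0:A) := rfl
  have e5411 : figureTwoMatrix α α' β β' Ta Tb (⟨5, by omega⟩ : Fin 7) (⟨4, by omega⟩ : Fin 7) = (0:A) := rfl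
  have e5500 : figureTwoMatrix α α' β β' Ta Tb (5 : Fin 7) (5 : Fin 7) = (0:A) := rfl
  have e5501 : figureTwoMatrix α α' β β' Ta Tb (5 : Fin 7) (⟨5, by omega⟩ : Fin 7) = (0:A) := rfl
  have e5510 : figureTwoMatrix α α' β β' Ta Tb (⟨5, by omega⟩ : Fin 7) (5 : Fin 7) = (0:A) := rfl
  have e5511 : figureTwoMatrix α α' β β' Ta Tb (⟨5, by omega⟩ : Fin 7) (⟨5, by omega⟩ : Fin 7) = (0:A) := rfl
  have e5600 : figureTwoMatrix α α' β β' Ta Tb (5 : Fin 7) (6 : Fin 7) = (0:A) := rfl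
  have e5601 : figureTwoMatrix α α' β β' Ta Tb (5 : Fin 7) (⟨6, by omega⟩ : Fin 7) = (0:A) := rfl
  have e5610 : figureTwoMatrix α α' β β' Ta Tb (⟨5, by omega⟩ : Fin 7) (6 : Fin 7) = (0:A) := rfl
  have e5611 : figureTwoMatrix α α' β β' Ta Tb (⟨5, by omega⟩ : Fin 7) (⟨6, by omega⟩ : Fin 7) = (0:A) := rfl
  have e6000 : figureTwoMatrix α α' β β' Ta Tb (6 : Fin 7) (0 : Fin 7) = (0:A) := rfl
  have e6001 : figureTwoMatrix α α' β β' Ta Tb (6 : Fin 7) (⟨0, by omega⟩ : Fin 7) = (0:A) := rfl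
  have e6010 : figureTwoMatrix α α' β β' Ta Tb (⟨6, by omega⟩ : Fin 7) (0 : Fin 7) = (0:A) := rfl
  have e6011 : figureTwoMatrix α α' β β' Ta Tb (⟨6, by omega⟩ : Fin 7) (⟨0, by omega⟩ : Fin 7) = (0:A) := rfl
  have e6100 : figureTwoMatrix α α' β β' Ta Tb (6 : Fin 7) (1 : Fin 7) = (0:A) := rfl
  have e6101 : figureTwoMatrix α α' β β' Ta Tb (6 : Fin 7) (⟨1, by omega⟩ : Fin 7) = (0:A) := rfl
  have e6110 : figureTwoMatrix α α' β β' Ta Tb (⟨6, by omega⟩ : Fin 7) (1 : Fin 7) = (0:A) := rfl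
  have e6111 : figureTwoMatrix α α' β β' Ta Tb (⟨6, by omega⟩ : Fin 7) (⟨1, by omega⟩ : Fin 7) = (0:A) := rfl
  have e6200 : figureTwoMatrix α α' β β' Ta Tb (6 : Fin 7) (2 : Fin 7) = (0:A) := rfl
  have e6201 : figureTwoMatrix α α' β β' Ta Tb (6 : Fin 7) (⟨2, by omega⟩ : Fin 7) = (0:A) := rfl
  have e6210 : figureTwoMatrix α α' β β' Ta Tb (⟨6, by omega⟩ : Fin 7) (2 : Fin 7) = (0:A) := rfl
  have e6211 : figureTwoMatrix α α' β β' Ta Tb (⟨6, by omega⟩ : Fin 7) (⟨2, by omega⟩ : Fin 7) = (0:A) := rfl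
  have e6300 : figureTwoMatrix α α' β β' Ta Tb (6 : Fin 7) (3 : Fin 7) = (0:A) := rfl
  have e6301 : figureTwoMatrix α α' β β' Ta Tb (6 : Fin 7) (⟨3, by omega⟩ : Fin 7) = (0:A) := rfl
  have e6310 : figureTwoMatrix α α' β β' Ta Tb (⟨6, by omega⟩ : Fin 7) (3 : Fin 7) = (0:A) := rfl
  have e6311 : figureTwoMatrix α α' β β' Ta Tb (⟨6, by omega⟩ : Fin 7) (⟨3, by omega⟩ : Fin 7) = (0:A) := rfl
  have e6400 : figureTwoMatrix α α' β β' Ta Tb (6 : Fin 7) (4 : Fin 7) = (0:A) := rfl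
  have e6401 : figureTwoMatrix α α' β β' Ta Tb (6 : Fin 7) (⟨4, by omega⟩ : Fin 7) = (0:A) := rfl
  have e6410 : figureTwoMatrix α α' β β' Ta Tb (⟨6, by omega⟩ : Fin 7) (4 : Fin 7) = (0:A) := rfl
  have e6411 : figureTwoMatrix α α' β β' Ta Tb (⟨6, by omega⟩ : Fin 7) (⟨4, by omega⟩ : Fin 7) = (0:A) := rfl
  have e6500 : figureTwoMatrix α α' β β' Ta Tb (6 : Fin 7) (5 : Fin 7) = (0:A) := rfl
  have e6501 : figureTwoMatrix α α' β β' Ta Tb (6 : Fin 7) (⟨5, by omega⟩ : Fin 7) = (0:A) := rfl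
  have e6510 : figureTwoMatrix α α' β β' Ta Tb (⟨6, by omega⟩ : Fin 7) (5 : Fin 7) = (0:A) := rfl
  have e6511 : figureTwoMatrix α α' β β' Ta Tb (⟨6, by omega⟩ : Fin 7) (⟨5, by omega⟩ : Fin 7) = (0:A) := rfl
  have e6600 : figureTwoMatrix α α' β β' Ta Tb (6 : Fin 7) (6 : Fin 7) = (0:A) := rfl
  have e6601 : figureTwoMatrix α α' β β' Ta Tb (6 : Fin 7) (⟨6, by omega⟩ : Fin 7) = (0:A) := rfl
  have e6610 : figureTwoMatrix α α' β β' Ta Tb (⟨6, by omega⟩ : Fin 7) (6 : Fin 7) = (0:A) := rfl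
  have e6611 : figureTwoMatrix α α' β β' Ta Tb (⟨6, by omega⟩ : Fin 7) (⟨6, by omega⟩ : Fin 7) = (0:A) := rfl
  intro i j
  fin_cases i <;> fin_cases j <;>
    simp only [Fin.sum_univ_seven, e0000, e0001, e0010, e0011, e0100, e0101, e0110, e0111, e0200, e0201, e0210, e0211, e0300, e0301, e0310, e0311, e0400, e0401, e0410, e0411, e0500, e0501, e0510, e0511, e0600, e0601, e0610, e0611, e1000, e1001, e1010, e1011, e1100, e1101, e1110, e1111, e1200, e1201, e1210, e1211, e1300, e1301, e1310, e1311, e1400, e1401, e1410, e1411, e1500, e1501, e1510, e1511, e1600, e1601, e1610, e1611, e2000, e2001, e2010, e2011, e2100, e2101, e2110, e2111, e2200, e2201, e2210, e2211, e2300, e2301, e2310, e2311, e2400, e2401, e2410, e2411, e2500, e2501, e2510, e2511, e2600, e2601, e2610, e2611, e3000, e3001, e3010, e3011, e3100, e3101, e3110, e3111, e3200, e3201, e3210, e3211, e3300, e3301, e3310, e3311, e3400, e3401, e3410, e3411, e3500, e3501, e3510, e3511, e3600, e3601, e3610, e3611, e4000, e4001, e4010, e4011, e4100, e4101, e4110,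 e4111, e4200, e4201, e4210, e4211, e4300, e4301, e4310, e4311, e4400, e4401, e4410, e4411, e4500, e4501, e4510, e4511, e4600, e4601, e4610, e4611, e5000, e5001, e5010, e5011, e5100, e5101, e5110, e5111, e5200, e5201, e5210, e5211, e5300, e5301, e5310, e5311, e5400, e5401, e5410, e5411, e5500, e5501, e5510, e5511, e5600, e5601, e5610, e5611, e6000, e6001, e6010, e6011, e6100, e6101, e6110, e6111, e6200, e6201, e6210, e6211, e6300, e6301, e6310, e6311, e6400, e6401, e6410, e6411, e6500, e6501, e6510, e6511, e6600, e6601, e6610, e6611] <;>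
    simp only [map_sub, map_zero, map_neg, hβ'β, hdTa, hdTb, hcα, hcα', hcβ, hcβ', sub_mul,
      mul_sub, mul_neg, neg_mul, neg_neg, sα, sβ, sα', sβ', hβ'α, hα'α, hα'β, hβα, hβ'α',
      mul_zero, zero_mul, neg_zero, sub_zero, zero_sub, add_zero, zero_add, sub_self] <;>
    abel
end
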